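/- arXiv:2410.12884 — 2 statements merged into one kernel-verified Lean document; each statement's English description precedes it below -/
import Mathlib

section
/- If an OWA mechanism has w_1 ∈ (0,1), then it violates NOM-W: there exist an agent i with true peak x_i ∈ (0, (1−w_1)/2) and misreport x'_i = 0 such that min_{x_{-i}} u(x_i, f(x_i, x_{-i})) < min_{x_{-i}} u(x_i, f(x'_i, x_{-i})). Specifically the worst-case utility under truth-telling is w_1 − x_i w_1 + x_i, while under the misreport it is w_1 + x_i. -/
noncomputable def owa {n : ℕ} (w x : Fin n → ℝ) : ℝ :=
  ∑ j, w j * x (Tuple.sort x j)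

/-- The set of utilities agent `i` with true peak `peak` can obtain, over all
profiles in `[0,1]^n` where agent `i` reports `rep`. -/
def utilSet {n : ℕ} (w : Fin n → ℝ) (i : Fin n) (peak rep : ℝ) : Set ℝ :=
  {u : ℝ | ∃ x : Fin n → ℝ, (∀ j, x j ∈ Set.Icc (0:ℝ) 1) ∧ x i = rep ∧
    u = 1 - |peak - owa w x|}

section aux
variable {n : ℕ}

lemma sort_zero_le (x : Fin n → ℝ) (hn : 0 < n) (i : Fin n) :
    x (Tuple.sort x ⟨0, hn⟩) ≤ x i := by
  have h := Tuple.monotone_sort x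
    (show (⟨0, hn⟩ : Fin n) ≤ (Tuple.sort x).symm i from Fin.mk_le_of_le_val (Nat.zero_le _))
  simpa using h

lemma owa_nonneg (w x : Fin n → ℝ) (hw : ∀ j, 0 ≤ w j) (hx : ∀ j, 0 ≤ x j) :
    0 ≤ owa w x :=
  Finset.sum_nonneg fun j _ => mul_nonneg (hw j) (hx _)

lemma owa_le (hn : 0 < n) (w x : Fin n → ℝ) (hw : ∀ j, w j ∈ Set.Icc (0:ℝ) 1)
    (hx : ∀ j, x j ∈ Set.Icc (0:ℝ) 1) (hsum : ∑ j, w j = 1) (i : Fin n) :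
    owa w x ≤ 1 - w ⟨0, hn⟩ + w ⟨0, hn⟩ * x i := by
  set z : Fin n := ⟨0, hn⟩
  have h1 : owa w x = w z * x (Tuple.sort x z) + ∑ j ∈ Finset.univ \ {z}, w j * x (Tuple.sort x j) :=
    Finset.sum_eq_add_sum_sdiff_singleton_of_mem (Finset.mem_univ z) _
  have h2 : (∑ j, w j) = w z + ∑ j ∈ Finset.univ \ {z}, w j :=
    Finset.sum_eq_add_sum_sdiff_singleton_of_mem (Finset.mem_univ z) _
  have h3 : ∑ j ∈ Finset.univ \ {z}, w j * x (Tuple.sort x j) ≤ ∑ j ∈ Finset.univ \ {z}, w j :=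
    Finset.sum_le_sum fun j _ => mul_le_of_le_one_right (hw j).1 (hx _).2
  have h4 : w z * x (Tuple.sort x z) ≤ w z * x i :=
    mul_le_mul_of_nonneg_left (sort_zero_le x hn i) (hw z).1
  have h5 : ∑ j ∈ Finset.univ \ {z}, w j = 1 - w z := by rw [hsum] at h2; linarith
  rw [h1]; rw [h5] at h3; linarith

lemma owa_update (hn : 0 < n) (w : Fin n → ℝ) (hsum : ∑ j, w j = 1) (i : Fin n) (r : ℝ)
    (hr : r < 1) :
    owa w (Function.update (fun _ => (1:ℝ)) i r) = 1 - w ⟨0, hn⟩ + w ⟨0, hn⟩ * r := by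
  set z : Fin n := ⟨0, hn⟩
  set x : Fin n → ℝ := Function.update (fun _ => (1:ℝ)) i r with hxdef
  have hxi : x i = r := by simp [hxdef]
  have hxo : ∀ k, k ≠ i → x k = 1 := fun k hk => by simp [hxdef, Function.update_of_ne hk]
  have hz : Tuple.sort x z = i := by
    by_contra hne
    have := sort_zero_le x hn i
    rw [hxi, hxo _ hne] at this
    linarith
  have h1 : owa w x = w z * x (Tuple.sort x z) + ∑ j ∈ Finset.univ \ {z}, w j * x (Tuple.sort x j) :=
    Finset.sum_eq_add_sum_sdiff_singleton_of_mem (Finset.mem_univ z) _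
  have h2 : (∑ j, w j) = w z + ∑ j ∈ Finset.univ \ {z}, w j :=
    Finset.sum_eq_add_sum_sdiff_singleton_of_mem (Finset.mem_univ z) _
  have h3 : ∀ j ∈ Finset.univ \ {z}, w j * x (Tuple.sort x j) = w j := by
    intro j hj
    have hjz : j ≠ z := by simpa using (Finset.mem_sdiff.mp hj).2
    have : Tuple.sort x j ≠ i := by
      rw [← hz]; exact fun h => hjz ((Tuple.sort x).injective h)
    rw [hxo _ this, mul_one]
  rw [h1, Finset.sum_congr rfl h3, hz, hxi]
  rw [hsum] at h2; linarith

lemma sInf_utilSet (hn : 0 < n) (w : Fin n → ℝ) (hw : ∀ j, w j ∈ Set.Icc (0:ℝ) 1)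
    (hsum : ∑ j, w j = 1) (i : Fin n) (xi r : ℝ) (hr0 : 0 ≤ r) (hr1 : r < 1)
    (hxr : r ≤ xi) (h2 : 2 * xi ≤ 1 - w ⟨0, hn⟩ + w ⟨0, hn⟩ * r) :
    sInf (utilSet w i xi r) = w ⟨0, hn⟩ + xi - w ⟨0, hn⟩ * r := by
  set z : Fin n := ⟨0, hn⟩
  set M : ℝ := 1 - w z + w z * r with hM
  have hxiM : xi ≤ M - xi := by simp only [hM]; linarith
  have hxi0 : 0 ≤ xi := le_trans hr0 hxr
  have hlow : ∀ u ∈ utilSet w i xi r, 1 - (M - xi) ≤ u := by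
    rintro u ⟨x, hx, hxi', rfl⟩
    have hub : owa w x ≤ M := by
      have := owa_le hn w x hw hx hsum i
      rw [hxi'] at this; exact this
    have hlb : 0 ≤ owa w x := owa_nonneg w x (fun j => (hw j).1) (fun j => (hx j).1)
    have : |xi - owa w x| ≤ M - xi := by
      rw [abs_le]; constructor <;> linarith
    linarith
  have hmem : 1 - (M - xi) ∈ utilSet w i xi r := by
    refine ⟨Function.update (fun _ => (1:ℝ)) i r, ?_, by simp, ?_⟩
    · intro j
      rcases eq_or_ne j i with rfl | hj
      · rw [Function.update_self]; exact ⟨hr0, le_of_lt hr1⟩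
      · rw [Function.update_of_ne hj]; exact ⟨zero_le_one, le_refl 1⟩
    · rw [owa_update hn w hsum i r hr1, ← hM, abs_of_nonpos (by linarith)]
      ring
  have : sInf (utilSet w i xi r) = 1 - (M - xi) :=
    le_antisymm (csInf_le ⟨1 - (M - xi), hlow⟩ hmem) (le_csInf ⟨_, hmem⟩ hlow)
  rw [this, hM]; ring

end aux

theorem owa_positive_first_weight_violates_NOM_worst {n : ℕ} (hn : 2 ≤ n)
    (w : Fin n → ℝ) (hw : ∀ j, w j ∈ Set.Icc (0:ℝ) 1) (hsum : ∑ j, w j = 1)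
    (h1 : w ⟨0, by omega⟩ ∈ Set.Ioo (0:ℝ) 1) :
    ∃ (i : Fin n) (xi : ℝ),
      xi ∈ Set.Ioo (0:ℝ) ((1 - w ⟨0, by omega⟩) / 2) ∧
      sInf (utilSet w i xi xi) = w ⟨0, by omega⟩ - xi * w ⟨0, by omega⟩ + xi ∧
      sInf (utilSet w i xi 0) = w ⟨0, by omega⟩ + xi ∧
      sInf (utilSet w i xi xi) < sInf (utilSet w i xi 0) := by
  have hn0 : 0 < n := by omega
  set z : Fin n := ⟨0, hn0⟩ with hz
  obtain ⟨hw0, hw1⟩ := h1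
  set xi : ℝ := (1 - w z) / 4 with hxi
  have hxi0 : 0 < xi := by simp only [hxi]; linarith
  have hxilt : xi < 1 := by simp only [hxi]; linarith
  have htruth : sInf (utilSet w z xi xi) = w z + xi - w z * xi :=
    sInf_utilSet hn0 w hw hsum z xi xi (le_of_lt hxi0) hxilt le_rfl
      (by nlinarith)
  have hmis : sInf (utilSet w z xi 0) = w z + xi - w z * 0 :=
    sInf_utilSet hn0 w hw hsum z xi 0 le_rfl one_pos (le_of_lt hxi0)
      (by nlinarith)
  refine ⟨z, xi, ⟨hxi0, by simp only [hxi]; linarith⟩, by rw [htruth]; ring, by rw [hmis]; ring, ?_⟩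
  rw [htruth, hmis]; nlinarith
end

section
/- If an OWA mechanism's weights are not all equal to 1/n, then it violates proportionality: there exists j ∈ {1,...,n−1} with ∑_{j'=1}^{j} w_{j'} ≠ j/n, and on the profile with j agents at 0 and n−j agents at 1 the output 1 − ∑_{j'=1}^{j} w_{j'} differs from (n−j)/n. -/
lemma owa_of_monotone {n : ℕ} (w x : Fin n → ℝ) (hx : Monotone x) :
    owa w x = ∑ j, w j * x j := by
  have := (Tuple.comp_sort_eq_comp_iff_monotone (σ := Equiv.refl (Fin n)) (f := x)).mpr
    (by simpa using hx)
  simp only [Equiv.coe_refl, Function.comp_id] at this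
  unfold owa
  refine Finset.sum_congr rfl fun j _ => ?_
  rw [show x ((Tuple.sort x) j) = (x ∘ ⇑(Tuple.sort x)) j from rfl, ← this]

theorem owa_not_average_violates_proportionality {n : ℕ} (hn : 1 ≤ n)
    (w : Fin n → ℝ) (hw : ∀ j, w j ∈ Set.Icc (0:ℝ) 1) (hsum : ∑ j, w j = 1)
    (h : ¬ ∀ j, w j = 1 / n) :
    ∃ j : ℕ, 1 ≤ j ∧ j ≤ n - 1 ∧
      (∑ j' ∈ Finset.univ.filter (fun j' : Fin n => (j' : ℕ) < j), w j') ≠ (j : ℝ) / n ∧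
      owa w (fun k => if (k : ℕ) < j then 0 else 1) =
        1 - ∑ j' ∈ Finset.univ.filter (fun j' : Fin n => (j' : ℕ) < j), w j' ∧
      owa w (fun k => if (k : ℕ) < j then 0 else 1) ≠ ((n : ℝ) - j) / n := by
  set S : ℕ → ℝ := fun j => ∑ j' ∈ Finset.univ.filter (fun j' : Fin n => (j' : ℕ) < j), w j'
    with hS
  have hn0 : (n : ℝ) ≠ 0 := Nat.cast_ne_zero.mpr (by omega)
  -- S 0 = 0, S n = 1
  have hS0 : S 0 = 0 := by simp [hS]
  have hSn : S n = 1 := by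
    rw [hS, ← hsum]
    exact Finset.sum_congr (by ext i; simp [i.isLt]) fun _ _ => rfl
  have hstep : ∀ i : Fin n, S (i + 1) = S i + w i := by
    intro i
    have : (Finset.univ.filter (fun j' : Fin n => (j' : ℕ) < (i : ℕ) + 1)) =
        insert i (Finset.univ.filter (fun j' : Fin n => (j' : ℕ) < (i : ℕ))) := by
      ext k; simp [Fin.ext_iff]; omega
    rw [hS]; simp only []
    rw [this, Finset.sum_insert (by simp)]
    ring
  -- existence of bad j
  have hex : ∃ j : ℕ, 1 ≤ j ∧ j ≤ n - 1 ∧ S j ≠ (j : ℝ) / n := by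
    by_contra hc
    push_neg at hc
    apply h
    have key : ∀ j : ℕ, j ≤ n → S j = (j : ℝ) / n := by
      intro j hj
      rcases Nat.eq_zero_or_pos j with rfl | hj1
      · simpa using hS0
      rcases eq_or_lt_of_le hj with rfl | hjn
      · rw [hSn]; field_simp
      · exact hc j hj1 (by omega)
    intro i
    have h1 := key (i + 1) (by omega)
    have h2 := key i (by omega)
    have := hstep i
    rw [h1, h2] at this
    push_cast at this
    field_simp at this ⊢
    linarith
  obtain ⟨j, hj1, hj2, hjS⟩ := hex
  have hjn : j < n := by omega
  have hmono : Monotone (fun k : Fin n => if (k : ℕ) < j then (0:ℝ) else 1) := by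
    intro a b hab
    have hab' : (a : ℕ) ≤ b := hab
    dsimp only
    split_ifs with h1 h2 <;> norm_num
    omega
  have howa : owa w (fun k => if (k : ℕ) < j then (0:ℝ) else 1) = 1 - S j := by
    rw [owa_of_monotone _ _ hmono]
    have split1 := Finset.sum_filter_add_sum_filter_not Finset.univ
      (fun k : Fin n => (k : ℕ) < j) (fun k => w k * if (k : ℕ) < j then (0:ℝ) else 1)
    have split2 := Finset.sum_filter_add_sum_filter_not Finset.univ
      (fun k : Fin n => (k : ℕ) < j) w
    rw [hsum] at split2
    have e1 : ∑ k ∈ Finset.univ.filter (fun k : Fin n => (k : ℕ) < j),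
        w k * (if (k : ℕ) < j then (0:ℝ) else 1) = 0 := by
      apply Finset.sum_eq_zero; intro k hk
      simp at hk; simp [hk]
    have e2 : ∑ k ∈ Finset.univ.filter (fun k : Fin n => ¬ (k : ℕ) < j),
        w k * (if (k : ℕ) < j then (0:ℝ) else 1) =
        ∑ k ∈ Finset.univ.filter (fun k : Fin n => ¬ (k : ℕ) < j), w k := by
      apply Finset.sum_congr rfl; intro k hk
      simp at hk; simp [hk]
    rw [e1, e2] at split1
    rw [hS]
    simp only []
    linarith
  refine ⟨j, hj1, hj2, hjS, howa, ?_⟩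
  rw [howa]
  intro hcon
  apply hjS
  have : ((n:ℝ) - j)/n = 1 - (j:ℝ)/n := by field_simp
  rw [this] at hcon
  linarith
end
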